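/- Let P be a countable bounded locally finite quasisemilattice with the property that for every finite sub-bqsl Q₁ of P (via a bqsl embedding f : Q₁ → P) and every one-point bqsl extension g : Q₁ → Q₂ (with |Q₂| = |Q₁| + 1), there is a bqsl embedding h : Q₂ → P with h ∘ g = f. Then P embeds (as a bqsl) every countable bounded locally finite quasisemilattice. -/

import Mathlib

/-- The set of maximal lower bounds of `p` and `q` in a poset. -/
def MLB {α : Type} [PartialOrder α] (p q : α) : Set α :=
  {r | r ≤ p ∧ r ≤ q ∧ ∀ s : α, s ≤ p → s ≤ q → r ≤ s → r = s}

/-- A quasisemilattice: every pair of elements has finitely many maximal lower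
bounds, and every common lower bound lies below one of them. -/
def IsQSL (α : Type) [PartialOrder α] : Prop :=
  ∀ p q : α, (MLB p q).Finite ∧ ∀ r : α, r ≤ p → r ≤ q → ∃ s ∈ MLB p q, r ≤ s

/-- Locally finite: every finite subset is contained in a finite subset closed
under taking maximal lower bounds of pairs. -/
def IsLocFinQSL (α : Type) [PartialOrder α] : Prop :=
  ∀ S : Set α, S.Finite →
    ∃ T : Set α, T.Finite ∧ S ⊆ T ∧ ∀ p ∈ T, ∀ q ∈ T, MLB p q ⊆ T

/-- A bqsl embedding: an order-embedding sending minimum to minimum and mapping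
the maximal lower bounds of each pair onto the maximal lower bounds of the
images. -/
def IsBqslEmb {α β : Type} [PartialOrder α] [OrderBot α] [PartialOrder β]
    [OrderBot β] (f : α → β) : Prop :=
  (∀ a b : α, f a ≤ f b ↔ a ≤ b) ∧ f ⊥ = ⊥ ∧
    ∀ p q : α, f '' MLB p q = MLB (f p) (f q)

namespace BqslAux

variable {α : Type} [PartialOrder α]

/-- Closed under maximal lower bounds. -/
def SubClosed (T : Set α) : Prop := ∀ p ∈ T, ∀ q ∈ T, MLB p q ⊆ T

/-- The bottom of a subset containing the bottom. -/
def botIn [OrderBot α] {T : Set α} (h : ⊥ ∈ T) : OrderBot ↥T where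
  bot := ⟨⊥, h⟩
  bot_le a := bot_le

theorem mlb_subtype (hqsl : IsQSL α) {T : Set α} (hT : SubClosed T)
    (p q r : ↥T) : r ∈ MLB p q ↔ (r : α) ∈ MLB (p : α) (q : α) := by
  constructor
  · rintro ⟨h1, h2, h3⟩
    obtain ⟨s, hs, hrs⟩ := (hqsl (p : α) (q : α)).2 r h1 h2
    have hsT : s ∈ T := hT p p.2 q q.2 hs
    have heq : r = (⟨s, hsT⟩ : ↥T) := h3 ⟨s, hsT⟩ hs.1 hs.2.1 hrs
    rw [heq]; exact hs
  · rintro ⟨h1, h2, h3⟩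
    exact ⟨h1, h2, fun s hs1 hs2 hrs => Subtype.ext (h3 s hs1 hs2 hrs)⟩

theorem isQSL_subtype (hqsl : IsQSL α) {T : Set α} (hT : SubClosed T) :
    IsQSL ↥T := by
  intro p q
  constructor
  · have hsub : (MLB p q : Set ↥T) ⊆ Subtype.val ⁻¹' MLB (p : α) (q : α) :=
      fun r hr => (mlb_subtype hqsl hT p q r).1 hr
    exact ((hqsl (p : α) (q : α)).1.preimage Subtype.val_injective.injOn).subset hsub
  · intro r h1 h2
    obtain ⟨s, hs, hrs⟩ := (hqsl (p : α) (q : α)).2 r h1 h2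
    have hsT : s ∈ T := hT p p.2 q q.2 hs
    exact ⟨⟨s, hsT⟩, (mlb_subtype hqsl hT p q ⟨s, hsT⟩).2 hs, hrs⟩

theorem incl_isBqslEmb [OrderBot α] (hqsl : IsQSL α) {S T : Set α}
    (hS : SubClosed S) (hST : S ⊆ T)
    [OrderBot ↥S] [OrderBot ↥T] (hbS : ((⊥ : ↥S) : α) = ⊥)
    (hbT : ((⊥ : ↥T) : α) = ⊥) (hT : SubClosed T) :
    IsBqslEmb (Set.inclusion hST) := by
  refine ⟨fun a b => Iff.rfl, ?_, fun p q => ?_⟩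
  · apply Subtype.ext
    rw [Set.coe_inclusion, hbS, hbT]
  · ext x
    constructor
    · rintro ⟨r, hr, rfl⟩
      have hamb := (mlb_subtype hqsl hS p q r).1 hr
      exact (mlb_subtype hqsl hT _ _ _).2 hamb
    · intro hx
      have hx' : (x : α) ∈ MLB (p : α) (q : α) :=
        (mlb_subtype hqsl hT _ _ x).1 hx
      have hxS : (x : α) ∈ S := hS p p.2 q q.2 hx'
      exact ⟨⟨(x : α), hxS⟩, (mlb_subtype hqsl hS p q _).2 hx', Subtype.ext rfl⟩

theorem peel {S T : Set α} (hS : SubClosed S) (hT : SubClosed T)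
    (hTfin : T.Finite) (hne : (T \ S).Nonempty) :
    ∃ t ∈ T \ S, SubClosed (T \ {t}) := by
  obtain ⟨t, ht, hmax⟩ :=
    Set.Finite.exists_maximalFor id (T \ S) (hTfin.diff) hne
  refine ⟨t, ht, ?_⟩
  intro p hp q hq r hr
  have hrT : r ∈ T := hT p hp.1 q hq.1 hr
  refine ⟨hrT, fun hrt => ?_⟩
  have hrt' : r = t := hrt
  subst hrt'
  -- r = t is a maximal lower bound of p and q
  by_cases hpS : p ∈ S
  · by_cases hqS : q ∈ S
    · exact ht.2 (hS p hpS q hqS hr)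
    · exact hq.2 (Set.mem_singleton_iff.2 (le_antisymm (hmax (j := q) ⟨hq.1, hqS⟩ hr.2.1) hr.2.1))
  · exact hp.2 (Set.mem_singleton_iff.2 (le_antisymm (hmax (j := p) ⟨hp.1, hpS⟩ hr.1) hr.1))

theorem extend {X P : Type} [PartialOrder X] [OrderBot X] [PartialOrder P]
    [OrderBot P] (hqslX : IsQSL X)
    (hext : ∀ (Q₁ Q₂ : Type) [Fintype Q₁] [PartialOrder Q₁] [OrderBot Q₁]
      [Fintype Q₂] [PartialOrder Q₂] [OrderBot Q₂],
      IsQSL Q₁ → IsQSL Q₂ →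
      Fintype.card Q₂ = Fintype.card Q₁ + 1 →
      ∀ (f : Q₁ → P) (g : Q₁ → Q₂), IsBqslEmb f → IsBqslEmb g →
        ∃ h : Q₂ → P, IsBqslEmb h ∧ h ∘ g = f) :
    ∀ (n : ℕ) (S T : Set X) (_ : T.Finite) (hS : SubClosed S) (hT : SubClosed T)
      (hbS : ⊥ ∈ S) (hbT : ⊥ ∈ T) (hST : S ⊆ T) (_ : (T \ S).ncard = n)
      (f : ↥S → P), @IsBqslEmb _ _ _ (botIn hbS) _ _ f →
      ∃ h : ↥T → P, @IsBqslEmb _ _ _ (botIn hbT) _ _ h ∧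
        ∀ (x : X) (hx : x ∈ S), h ⟨x, hST hx⟩ = f ⟨x, hx⟩ := by
  intro n
  induction n with
  | zero =>
    intro S T hTfin hS hT hbS hbT hST hcard f hf
    have hd : T \ S = ∅ := (Set.ncard_eq_zero (hTfin.diff)).1 hcard
    have hTS : T = S :=
      le_antisymm (fun x hx => by
        by_contra hxs
        exact (Set.eq_empty_iff_forall_notMem.1 hd x) ⟨hx, hxs⟩) hST
    subst hTS
    exact ⟨f, hf, fun x hx => rfl⟩
  | succ n ih =>
    intro S T hTfin hS hT hbS hbT hST hcard f hf
    have hne : (T \ S).Nonempty := Set.nonempty_of_ncard_ne_zero (by omega)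
    obtain ⟨t, ht, hT'⟩ := peel hS hT hTfin hne
    have hT'fin : (T \ {t}).Finite := hTfin.diff
    have hST' : S ⊆ T \ {t} :=
      fun x hx => ⟨hST hx, fun hxt => ht.2 ((Set.mem_singleton_iff.1 hxt) ▸ hx)⟩
    have hbT' : ⊥ ∈ T \ {t} := hST' hbS
    have hT'T : T \ {t} ⊆ T := Set.diff_subset
    have hcard' : ((T \ {t}) \ S).ncard = n := by
      have hcomm : (T \ {t}) \ S = (T \ S) \ {t} := by
        rw [Set.diff_diff_comm]
      rw [hcomm, Set.ncard_diff_singleton_of_mem ht, hcard]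
      omega
    obtain ⟨f', hf', hcomp'⟩ := ih S (T \ {t}) hT'fin hS hT' hbS hbT' hST' hcard' f hf
    letI : Fintype ↥(T \ {t}) := hT'fin.fintype
    letI : Fintype ↥T := hTfin.fintype
    letI : OrderBot ↥(T \ {t}) := botIn hbT'
    letI : OrderBot ↥T := botIn hbT
    have hins : insert t (T \ {t}) = T := by
      rw [Set.insert_diff_singleton, Set.insert_eq_of_mem ht.1]
    have hcardQ : Fintype.card ↥T = Fintype.card ↥(T \ {t}) + 1 := by
      rw [← Nat.card_eq_fintype_card, ← Nat.card_eq_fintype_card,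
        Nat.card_coe_set_eq, Nat.card_coe_set_eq,
        ← Set.ncard_insert_of_notMem (fun h => h.2 rfl) hT'fin, hins]
    obtain ⟨h, hh, hhg⟩ := hext (↥(T \ {t})) (↥T)
      (isQSL_subtype hqslX hT') (isQSL_subtype hqslX hT) hcardQ
      f' (Set.inclusion hT'T) hf'
      (incl_isBqslEmb hqslX hT' hT'T rfl rfl hT)
    refine ⟨h, hh, fun x hx => ?_⟩
    have hgx := congrFun hhg ⟨x, hST' hx⟩
    calc h ⟨x, hST hx⟩ = h (Set.inclusion hT'T ⟨x, hST' hx⟩) := rfl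
      _ = f' ⟨x, hST' hx⟩ := hgx
      _ = f ⟨x, hx⟩ := hcomp' x hx

section Chain

variable {X : Type} [PartialOrder X] [OrderBot X]

/-- A finite closure of a finite set. -/
noncomputable def closON (hlf : IsLocFinQSL X) (s : Set X) (hs : s.Finite) :
    Set X := (hlf s hs).choose

theorem closON_spec (hlf : IsLocFinQSL X) (s : Set X) (hs : s.Finite) :
    (closON hlf s hs).Finite ∧ s ⊆ closON hlf s hs ∧
      SubClosed (closON hlf s hs) := (hlf s hs).choose_spec

/-- An increasing chain of finite closed subsets covering the range of `u`. -/
noncomputable def chain (hlf : IsLocFinQSL X) (u : ℕ → X) :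
    ℕ → {s : Set X // s.Finite ∧ ⊥ ∈ s ∧ SubClosed s}
  | 0 =>
    ⟨closON hlf {⊥} (Set.finite_singleton _),
      (closON_spec hlf _ _).1,
      (closON_spec hlf _ _).2.1 rfl,
      (closON_spec hlf _ _).2.2⟩
  | (n + 1) =>
    ⟨closON hlf (insert (u n) (chain hlf u n).1) ((chain hlf u n).2.1.insert _),
      (closON_spec hlf _ _).1,
      (closON_spec hlf _ _).2.1 (Set.mem_insert_of_mem _ (chain hlf u n).2.2.1),
      (closON_spec hlf _ _).2.2⟩

theorem chain_succ_sub (hlf : IsLocFinQSL X) (u : ℕ → X) (n : ℕ) :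
    (chain hlf u n).1 ⊆ (chain hlf u (n + 1)).1 := fun x hx =>
  (closON_spec hlf (insert (u n) (chain hlf u n).1)
    ((chain hlf u n).2.1.insert _)).2.1 (Set.mem_insert_of_mem _ hx)

theorem chain_mem_u (hlf : IsLocFinQSL X) (u : ℕ → X) (n : ℕ) :
    u n ∈ (chain hlf u (n + 1)).1 :=
  (closON_spec hlf (insert (u n) (chain hlf u n).1)
    ((chain hlf u n).2.1.insert _)).2.1 (Set.mem_insert _ _)

theorem chain_mono (hlf : IsLocFinQSL X) (u : ℕ → X) {m n : ℕ} (hmn : m ≤ n) :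
    (chain hlf u m).1 ⊆ (chain hlf u n).1 := by
  induction n, hmn using Nat.le_induction with
  | base => exact fun _ h => h
  | succ n hmn ih => exact fun x hx => chain_succ_sub hlf u n (ih hx)

end Chain

section EmbChain

variable {X P : Type} [PartialOrder X] [OrderBot X] [PartialOrder P] [OrderBot P]

theorem base_emb :
    @IsBqslEmb (↥({⊥} : Set X)) P _ (botIn rfl) _ _ (fun _ => ⊥) := by
  have hall : ∀ a : ↥({⊥} : Set X), (a : X) = ⊥ := fun a => a.2
  refine ⟨fun a b => ?_, rfl, fun p q => ?_⟩
  · constructor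
    · intro _
      show (a : X) ≤ (b : X)
      rw [hall a, hall b]
    · intro _; exact le_refl ⊥
  · have hmem : p ∈ MLB p q := by
      refine ⟨le_refl p, ?_, fun s _ _ _ => ?_⟩
      · show (p : X) ≤ (q : X); rw [hall p, hall q]
      · apply Subtype.ext; rw [hall p, hall s]
    have hsub : MLB p q = {p} := by
      apply Set.eq_singleton_iff_unique_mem.2
      exact ⟨hmem, fun r _ => Subtype.ext (by rw [hall r, hall p])⟩
    rw [hsub]
    have : MLB (⊥ : P) ⊥ = {⊥} := by
      apply Set.eq_singleton_iff_unique_mem.2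
      refine ⟨⟨le_refl _, le_refl _, fun s hs _ hbs => le_antisymm hbs hs⟩,
        fun r hr => le_antisymm hr.1 bot_le⟩
    rw [Set.image_singleton, this]

variable (hqslX : IsQSL X) (hlf : IsLocFinQSL X) (u : ℕ → X)
  (hext : ∀ (Q₁ Q₂ : Type) [Fintype Q₁] [PartialOrder Q₁] [OrderBot Q₁]
      [Fintype Q₂] [PartialOrder Q₂] [OrderBot Q₂],
      IsQSL Q₁ → IsQSL Q₂ →
      Fintype.card Q₂ = Fintype.card Q₁ + 1 →
      ∀ (f : Q₁ → P) (g : Q₁ → Q₂), IsBqslEmb f → IsBqslEmb g →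
        ∃ h : Q₂ → P, IsBqslEmb h ∧ h ∘ g = f)

/-- The one-step extension of embeddings along the chain, packaged. -/
noncomputable def stepEx (n : ℕ) (f : ↥(chain hlf u n).1 → P)
    (hf : @IsBqslEmb _ _ _ (botIn (chain hlf u n).2.2.1) _ _ f) :
    {h : ↥(chain hlf u (n + 1)).1 → P //
      @IsBqslEmb _ _ _ (botIn (chain hlf u (n + 1)).2.2.1) _ _ h ∧
      ∀ (x : X) (hx : x ∈ (chain hlf u n).1),
        h ⟨x, chain_succ_sub hlf u n hx⟩ = f ⟨x, hx⟩} :=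
  let E := extend hqslX hext (((chain hlf u (n + 1)).1 \ (chain hlf u n).1).ncard)
      (chain hlf u n).1 (chain hlf u (n + 1)).1 (chain hlf u (n + 1)).2.1
      (chain hlf u n).2.2.2 (chain hlf u (n + 1)).2.2.2
      (chain hlf u n).2.2.1 (chain hlf u (n + 1)).2.2.1
      (chain_succ_sub hlf u n) rfl f hf
  ⟨E.choose, E.choose_spec.1, E.choose_spec.2⟩

/-- The base embedding of `chain 0`, packaged. -/
noncomputable def baseEx :
    {h : ↥(chain hlf u 0).1 → P //
      @IsBqslEmb _ _ _ (botIn (chain hlf u 0).2.2.1) _ _ h} :=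
  let E := extend hqslX hext (((chain hlf u 0).1 \ ({⊥} : Set X)).ncard)
      ({⊥} : Set X) (chain hlf u 0).1 (chain hlf u 0).2.1
      (fun p hp q hq r hr => le_antisymm (le_trans hr.1 (le_of_eq hp)) bot_le)
      (chain hlf u 0).2.2.2 rfl (chain hlf u 0).2.2.1
      (fun x hx => (Set.mem_singleton_iff.1 hx) ▸ (chain hlf u 0).2.2.1)
      rfl (fun _ => ⊥) base_emb
  ⟨E.choose, E.choose_spec.1⟩

/-- The chain of compatible embeddings. -/
noncomputable def embCh :
    ∀ n : ℕ, {f : ↥(chain hlf u n).1 → P //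
      @IsBqslEmb _ _ _ (botIn (chain hlf u n).2.2.1) _ _ f}
  | 0 => baseEx hqslX hlf u hext
  | (n + 1) =>
    ⟨(stepEx hqslX hlf u hext n (embCh n).1 (embCh n).2).1,
     (stepEx hqslX hlf u hext n (embCh n).1 (embCh n).2).2.1⟩

theorem embCh_compat (n : ℕ) (x : X) (hx : x ∈ (chain hlf u n).1) :
    (embCh hqslX hlf u hext (n + 1)).1 ⟨x, chain_succ_sub hlf u n hx⟩ =
      (embCh hqslX hlf u hext n).1 ⟨x, hx⟩ :=
  (stepEx hqslX hlf u hext n (embCh hqslX hlf u hext n).1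
    (embCh hqslX hlf u hext n).2).2.2 x hx

theorem embCh_le {m n : ℕ} (hmn : m ≤ n) (x : X) (hx : x ∈ (chain hlf u m).1) :
    (embCh hqslX hlf u hext n).1 ⟨x, chain_mono hlf u hmn hx⟩ =
      (embCh hqslX hlf u hext m).1 ⟨x, hx⟩ := by
  induction n, hmn using Nat.le_induction with
  | base => rfl
  | succ n hmn ih =>
    exact (embCh_compat hqslX hlf u hext n x (chain_mono hlf u hmn hx)).trans ih

end EmbChain

end BqslAux

open BqslAux

/-- If a countable bounded locally finite quasisemilattice `P` has the one-point
extension property for finite sub-bqsls, then `P` embeds every countable bounded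
locally finite quasisemilattice. -/
theorem stmt_15 {P : Type} [PartialOrder P] [OrderBot P] [Countable P]
    (hqsl : IsQSL P) (hlf : IsLocFinQSL P)
    (hext : ∀ (Q₁ Q₂ : Type) [Fintype Q₁] [PartialOrder Q₁] [OrderBot Q₁]
      [Fintype Q₂] [PartialOrder Q₂] [OrderBot Q₂],
      IsQSL Q₁ → IsQSL Q₂ →
      Fintype.card Q₂ = Fintype.card Q₁ + 1 →
      ∀ (f : Q₁ → P) (g : Q₁ → Q₂), IsBqslEmb f → IsBqslEmb g →
        ∃ h : Q₂ → P, IsBqslEmb h ∧ h ∘ g = f) :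
    ∀ (X : Type) [PartialOrder X] [OrderBot X] [Countable X],
      IsQSL X → IsLocFinQSL X → ∃ e : X → P, IsBqslEmb e := by
  intro X _ _ _ hqslX hlfX
  have : Nonempty X := ⟨⊥⟩
  obtain ⟨u, hu⟩ := exists_surjective_nat X
  have hmem : ∀ x : X, ∃ n, x ∈ (chain hlfX u n).1 := by
    intro x
    obtain ⟨k, rfl⟩ := hu x
    exact ⟨k + 1, chain_mem_u hlfX u k⟩
  set E := embCh hqslX hlfX u hext with hE
  let e : X → P := fun x => (E (hmem x).choose).1 ⟨x, (hmem x).choose_spec⟩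
  have he : ∀ (n : ℕ) (x : X) (hx : x ∈ (chain hlfX u n).1),
      e x = (E n).1 ⟨x, hx⟩ := by
    intro n x hx
    have h1 := embCh_le hqslX hlfX u hext
      (le_max_left (hmem x).choose n) x (hmem x).choose_spec
    have h2 := embCh_le hqslX hlfX u hext (le_max_right (hmem x).choose n) x hx
    exact h1.symm.trans h2
  refine ⟨e, fun a b => ?_, ?_, fun p q => ?_⟩
  · obtain ⟨na, hna⟩ := hmem a
    obtain ⟨nb, hnb⟩ := hmem b
    have haN : a ∈ (chain hlfX u (max na nb)).1 :=
      chain_mono hlfX u (le_max_left _ _) hna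
    have hbN : b ∈ (chain hlfX u (max na nb)).1 :=
      chain_mono hlfX u (le_max_right _ _) hnb
    rw [he (max na nb) a haN, he (max na nb) b hbN]
    exact (E (max na nb)).2.1 ⟨a, haN⟩ ⟨b, hbN⟩
  · rw [he 0 ⊥ (chain hlfX u 0).2.2.1]
    exact (E 0).2.2.1
  · obtain ⟨np, hnp⟩ := hmem p
    obtain ⟨nq, hnq⟩ := hmem q
    set N := max np nq with hN
    have hpN : p ∈ (chain hlfX u N).1 := chain_mono hlfX u (le_max_left _ _) hnp
    have hqN : q ∈ (chain hlfX u N).1 := chain_mono hlfX u (le_max_right _ _) hnq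
    rw [he N p hpN, he N q hqN, ← (E N).2.2.2 ⟨p, hpN⟩ ⟨q, hqN⟩]
    ext z
    constructor
    · rintro ⟨w, hw, rfl⟩
      have hwN : w ∈ (chain hlfX u N).1 := (chain hlfX u N).2.2.2 p hpN q hqN hw
      refine ⟨⟨w, hwN⟩, ?_, (he N w hwN).symm⟩
      exact (mlb_subtype hqslX (chain hlfX u N).2.2.2 ⟨p, hpN⟩ ⟨q, hqN⟩ ⟨w, hwN⟩).2 hw
    · rintro ⟨r, hr, rfl⟩
      refine ⟨(r : X), ?_, ?_⟩
      · exact (mlb_subtype hqslX (chain hlfX u N).2.2.2 ⟨p, hpN⟩ ⟨q, hqN⟩ r).1 hr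
      · exact he N (r : X) r.2
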